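/- Let φ₀ be a monotonic enhancement function of range R₀ on the square lattice ℤ², and define Φ₀ by Φ₀(ω) = {o} if o ∈ φ_x(ω) for some x ∈ 𝔹₀ = ℤ² ∩ B(R₀), and Φ₀(ω) = ∅ otherwise (so Φ₀ is an enhancement function of range 2R₀). Then φ₀ is essential if and only if Φ₀ is essential. -/

import Mathlib

open MeasureTheory Filter Set Topology
open scoped ENNReal

namespace PercEnh

/-- Sites of the lattice (vertex set `ℤ²`). -/
abbrev Site : Type := ℤ × ℤ

/-- A configuration: the set of open sites. -/
abbrev Config : Type := Set Site

/-- Square-lattice (`ℤ²`-) adjacency: `‖x − y‖₁ = 1`. -/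
def adjZ2 (x y : Site) : Prop := |x.1 - y.1| + |x.2 - y.2| = 1

/-- Matching (star) adjacency: `x ≠ y` and `‖x − y‖_∞ = 1`. -/
def adjStar (x y : Site) : Prop := x ≠ y ∧ max |x.1 - y.1| |x.2 - y.2| = 1

/-- Euclidean norm of a site. -/
noncomputable def siteNorm (x : Site) : ℝ := Real.sqrt ((x.1 : ℝ) ^ 2 + (x.2 : ℝ) ^ 2)

/-- Sites in the closed Euclidean ball of radius `r` centred at the origin. -/
def siteBall (r : ℝ) : Set Site := {x | siteNorm x ≤ r}

/-- The shifted configuration `τ_x ω = {y − x : y ∈ ω}`. -/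
def shiftConfig (x : Site) (ω : Config) : Config := {y | y + x ∈ ω}

/-- An enhancement function of (finite) range `R₀`: takes values in subsets of
`𝔹₀ = ℤ² ∩ B(R₀)` and depends only on the restriction of the configuration to `𝔹₀`. -/
def IsEnhancement (R₀ : ℝ) (φ : Config → Config) : Prop :=
  0 ≤ R₀ ∧ (∀ ω, φ ω ⊆ siteBall R₀) ∧
    ∀ ω ω' : Config, ω ∩ siteBall R₀ = ω' ∩ siteBall R₀ → φ ω = φ ω'

/-- A monotonic enhancement function. -/
def Monotonic (φ : Config → Config) : Prop := ∀ ω ω' : Config, ω ⊆ ω' → φ ω ⊆ φ ω'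

/-- The translate `φ_x(ω) = x + φ₀(τ_x ω)`. -/
def enhAt (φ : Config → Config) (x : Site) (ω : Config) : Config :=
  (fun z => z + x) '' φ (shiftConfig x ω)

/-- The enhanced configuration `ω̂(ω, α) = ω ∪ ⋃_{x : α(x)=1} φ_x(ω)`. -/
def enhanced (φ : Config → Config) (ω : Config) (α : Site → Bool) : Config :=
  ω ∪ {y | ∃ x, α x = true ∧ y ∈ enhAt φ x ω}

/-- The fully (deterministically, with `s = 1`) enhanced configuration `ω̃`. -/
def fullyEnhanced (φ : Config → Config) (ω : Config) : Config :=
  ω ∪ {y | ∃ x, y ∈ enhAt φ x ω}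

/-- `ω` contains a doubly-infinite self-repelling path (w.r.t. adjacency `adj`):
a two-sided sequence of distinct sites of `ω` in which exactly the consecutive
pairs are adjacent. -/
def HasDISRPath (adj : Site → Site → Prop) (ω : Config) : Prop :=
  ∃ γ : ℤ → Site, Function.Injective γ ∧ (∀ i, γ i ∈ ω) ∧
    ∀ i j : ℤ, adj (γ i) (γ j) ↔ (j = i + 1 ∨ i = j + 1)

/-- The enhancement is essential: some configuration without a doubly-infinite
self-repelling path acquires one upon enhancement at the origin. -/
def Essential (adj : Site → Site → Prop) (φ : Config → Config) : Prop :=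
  ∃ ω : Config, ¬ HasDISRPath adj ω ∧ HasDISRPath adj (ω ∪ φ ω)

/-- A (finite, nonempty) path w.r.t. adjacency `adj`: distinct sites,
consecutive ones adjacent. -/
def IsPathOn (adj : Site → Site → Prop) (l : List Site) : Prop :=
  l ≠ [] ∧ l.Nodup ∧ l.Chain' adj

/-- `x` and `y` are joined by a path of sites of `ω`. -/
def ConnectedIn (adj : Site → Site → Prop) (ω : Config) (x y : Site) : Prop :=
  ∃ l : List Site, IsPathOn adj l ∧ (∀ z ∈ l, z ∈ ω) ∧
    l.head? = some x ∧ l.getLast? = some y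

/-- `x` belongs to an infinite open cluster of `ω`. -/
def InInfiniteCluster (adj : Site → Site → Prop) (ω : Config) (x : Site) : Prop :=
  {y | ConnectedIn adj ω x y}.Infinite

/-- `ω` contains an infinite open cluster. -/
def HasInfiniteCluster (adj : Site → Site → Prop) (ω : Config) : Prop :=
  ∃ x, InInfiniteCluster adj ω x

/-- The configuration corresponding to `η : Site → Bool`. -/
def toConfig (η : Site → Bool) : Config := {x | η x = true}

/-- A cylinder event. -/
def cylinder (F : Finset Site) (b : Site → Bool) : Set (Site → Bool) :=
  {η | ∀ x ∈ F, η x = b x}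

/-- `μ` is the Bernoulli product measure with density `p` of open sites. -/
def IsBernoulli (p : ℝ) (μ : Measure (Site → Bool)) : Prop :=
  IsProbabilityMeasure μ ∧
    ∀ (F : Finset Site) (b : Site → Bool),
      μ (cylinder F b) = ∏ x ∈ F, ENNReal.ofReal (if b x then p else 1 - p)

/-- The percolation probability `θ`: the probability that the origin lies in an
infinite open cluster. -/
noncomputable def theta (adj : Site → Site → Prop) (μ : Measure (Site → Bool)) : ℝ :=
  (μ {η | InInfiniteCluster adj (toConfig η) 0}).toReal

/-- The percolation probability of the enhanced process (`μ` the law of the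
configuration, `ν` the law of the activation variables). -/
noncomputable def thetaEnh (adj : Site → Site → Prop) (φ : Config → Config)
    (μ ν : Measure (Site → Bool)) : ℝ :=
  ((μ.prod ν) {ηα | InInfiniteCluster adj (enhanced φ (toConfig ηα.1) ηα.2) 0}).toReal

/-- The critical point `p_c = sup {p ∈ [0,1] : θ(p) = 0}` for the family `P`. -/
noncomputable def pcOf (adj : Site → Site → Prop) (P : ℝ → Measure (Site → Bool)) : ℝ :=
  sSup {p | p ∈ Icc (0:ℝ) 1 ∧ theta adj (P p) = 0}

/-- The connectivity function `τ_p(x)`. -/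
noncomputable def tau (adj : Site → Site → Prop) (μ : Measure (Site → Bool)) (x : Site) : ℝ :=
  (μ {η | ConnectedIn adj (toConfig η) 0 x}).toReal

/-- The connectivity function `τ_{p,s}(x)` of the enhanced process. -/
noncomputable def tauEnh (adj : Site → Site → Prop) (φ : Config → Config)
    (μ ν : Measure (Site → Bool)) (x : Site) : ℝ :=
  ((μ.prod ν) {ηα | ConnectedIn adj (enhanced φ (toConfig ηα.1) ηα.2) 0 x}).toReal

/-- The mean cluster size `χ(p) = E_p‖C‖ = ∑_x τ_p(x)`. -/
noncomputable def chi (adj : Site → Site → Prop) (μ : Measure (Site → Bool)) : ℝ≥0∞ :=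
  ∑' x : Site, μ {η | ConnectedIn adj (toConfig η) 0 x}

/-- The mean cluster size of the enhanced process. -/
noncomputable def chiEnh (adj : Site → Site → Prop) (φ : Config → Config)
    (μ ν : Measure (Site → Bool)) : ℝ≥0∞ :=
  ∑' x : Site, (μ.prod ν) {ηα | ConnectedIn adj (enhanced φ (toConfig ηα.1) ηα.2) 0 x}


/-- The simplified enhancement function `Φ₀` built from `φ₀`: it adds the origin iff
`o ∈ φ_x(ω)` for some `x ∈ 𝔹₀ = ℤ² ∩ B(R₀)` (an enhancement function of range `2R₀`). -/
def bigPhi (R₀ : ℝ) (φ : Config → Config) : Config → Config := fun ω =>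
  {z | z = 0 ∧ ∃ x ∈ siteBall R₀, (0 : Site) ∈ enhAt φ x ω}

lemma hasDISRPath_mono {adj : Site → Site → Prop} {ω ω' : Config} (h : ω ⊆ ω') :
    HasDISRPath adj ω → HasDISRPath adj ω' := by
  rintro ⟨γ, h1, h2, h3⟩
  exact ⟨γ, h1, fun i => h (h2 i), h3⟩

lemma adjZ2_sub (a b v : Site) : adjZ2 (a - v) (b - v) ↔ adjZ2 a b := by
  have h1 : (a - v).1 - (b - v).1 = a.1 - b.1 := by simp
  have h2 : (a - v).2 - (b - v).2 = a.2 - b.2 := by simp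
  unfold adjZ2
  rw [h1, h2]

lemma hasDISRPath_shift (v : Site) (ω : Config) :
    HasDISRPath adjZ2 ω → HasDISRPath adjZ2 (shiftConfig v ω) := by
  rintro ⟨γ, h1, h2, h3⟩
  refine ⟨fun i => γ i - v, ?_, ?_, ?_⟩
  · intro i j h
    apply h1
    have := congrArg (fun z => z + v) h
    simpa using this
  · intro i
    show γ i - v + v ∈ ω
    simpa using h2 i
  · intro i j
    rw [adjZ2_sub]
    exact h3 i j

lemma shiftConfig_neg (v : Site) (ω : Config) : shiftConfig (-v) (shiftConfig v ω) = ω := by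
  ext z
  simp [shiftConfig]

lemma hasDISRPath_unshift (v : Site) (ω : Config) :
    HasDISRPath adjZ2 (shiftConfig v ω) → HasDISRPath adjZ2 ω := by
  intro h
  have := hasDISRPath_shift (-v) _ h
  rwa [shiftConfig_neg] at this

lemma siteBall_finite (r : ℝ) : (siteBall r).Finite := by
  have hsub : siteBall r ⊆ (Set.Icc (-⌈r⌉) ⌈r⌉) ×ˢ (Set.Icc (-⌈r⌉) ⌈r⌉) := by
    intro x hx
    have hx' : Real.sqrt ((x.1 : ℝ) ^ 2 + (x.2 : ℝ) ^ 2) ≤ r := hx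
    have h1 : |(x.1 : ℝ)| ≤ r := by
      calc |(x.1 : ℝ)| = Real.sqrt ((x.1 : ℝ) ^ 2) := (Real.sqrt_sq_eq_abs _).symm
        _ ≤ Real.sqrt ((x.1 : ℝ) ^ 2 + (x.2 : ℝ) ^ 2) :=
            Real.sqrt_le_sqrt (by nlinarith [sq_nonneg ((x.2 : ℝ))])
        _ ≤ r := hx'
    have h2 : |(x.2 : ℝ)| ≤ r := by
      calc |(x.2 : ℝ)| = Real.sqrt ((x.2 : ℝ) ^ 2) := (Real.sqrt_sq_eq_abs _).symm
        _ ≤ Real.sqrt ((x.1 : ℝ) ^ 2 + (x.2 : ℝ) ^ 2) :=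
            Real.sqrt_le_sqrt (by nlinarith [sq_nonneg ((x.1 : ℝ))])
        _ ≤ r := hx'
    have hr : r ≤ (⌈r⌉ : ℝ) := Int.le_ceil r
    constructor
    · constructor
      · have : -(⌈r⌉ : ℝ) ≤ (x.1 : ℝ) := by
          have := neg_abs_le ((x.1 : ℝ)); linarith
        exact_mod_cast this
      · have : (x.1 : ℝ) ≤ (⌈r⌉ : ℝ) := le_trans (le_abs_self _) (le_trans h1 hr)
        exact_mod_cast this
    · constructor
      · have : -(⌈r⌉ : ℝ) ≤ (x.2 : ℝ) := by
          have := neg_abs_le ((x.2 : ℝ)); linarith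
        exact_mod_cast this
      · have : (x.2 : ℝ) ≤ (⌈r⌉ : ℝ) := le_trans (le_abs_self _) (le_trans h2 hr)
        exact_mod_cast this
  exact Set.Finite.subset ((Set.finite_Icc _ _).prod (Set.finite_Icc _ _)) hsub

lemma siteBall_neg {r : ℝ} {y : Site} (h : y ∈ siteBall r) : -y ∈ siteBall r := by
  have : siteNorm (-y) = siteNorm y := by
    unfold siteNorm
    simp
  show siteNorm (-y) ≤ r
  rw [this]; exact h

lemma exists_step (ω : Config) (h0 : ¬ HasDISRPath adjZ2 ω) :
    ∀ S : Finset Site, HasDISRPath adjZ2 (ω ∪ ↑S) →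
      ∃ (T : Set Site) (y : Site), T ⊆ ↑S ∧ y ∈ S ∧ ¬ HasDISRPath adjZ2 (ω ∪ T) ∧
        HasDISRPath adjZ2 (ω ∪ T ∪ {y}) := by
  intro S
  induction S using Finset.induction_on with
  | empty =>
      intro h1
      simp only [Finset.coe_empty, Set.union_empty] at h1
      exact absurd h1 h0
  | @insert a s ha ih =>
      intro h1
      by_cases hs : HasDISRPath adjZ2 (ω ∪ ↑s)
      · obtain ⟨T, y, hT, hy, h2, h3⟩ := ih hs
        refine ⟨T, y, hT.trans ?_, Finset.mem_insert_of_mem hy, h2, h3⟩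
        simp only [Finset.coe_insert]
        exact Set.subset_insert _ _
      · refine ⟨↑s, a, ?_, Finset.mem_insert_self _ _, hs, ?_⟩
        · simp only [Finset.coe_insert]
          exact Set.subset_insert _ _
        · have heq : (ω ∪ ↑s ∪ {a}) = ω ∪ ↑(insert a s) := by
            ext z
            simp only [Finset.coe_insert, Set.mem_union, Set.mem_insert_iff,
              Set.mem_singleton_iff]
            tauto
          rw [heq]
          exact h1

/-- for a monotonic enhancement function `φ₀` of range `R₀`,
`φ₀` is essential iff `Φ₀` is essential. -/
theorem essential_iff_bigPhi_essential
    (R₀ : ℝ) (φ : Config → Config) (hφ : IsEnhancement R₀ φ) (hmono : Monotonic φ) :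
    Essential adjZ2 φ ↔ Essential adjZ2 (bigPhi R₀ φ) := by
  obtain ⟨hR0, hrange, -⟩ := hφ
  constructor
  · rintro ⟨ω, hno, hyes⟩
    have hfin : (φ ω).Finite := (siteBall_finite R₀).subset (hrange ω)
    obtain ⟨T, y, hTsub, hyS, hT0, hT1⟩ :=
      exists_step ω hno hfin.toFinset (by rwa [hfin.coe_toFinset])
    have hyφ : y ∈ φ ω := by rwa [hfin.mem_toFinset] at hyS
    set ω₁ : Config := ω ∪ T with hω₁
    set ω'' : Config := shiftConfig y ω₁ with hω''
    refine ⟨ω'', fun h => hT0 (hasDISRPath_unshift y _ h), ?_⟩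
    have h0mem : (0 : Site) ∈ bigPhi R₀ φ ω'' := by
      refine ⟨rfl, -y, siteBall_neg (hrange ω hyφ), ?_⟩
      refine ⟨y, ?_, by simp⟩
      have hrw : shiftConfig (-y) ω'' = ω₁ := shiftConfig_neg y ω₁
      rw [hrw]
      exact hmono ω ω₁ Set.subset_union_left hyφ
    apply hasDISRPath_mono
      (show ω'' ∪ {0} ⊆ ω'' ∪ bigPhi R₀ φ ω'' from
        Set.union_subset_union_right _ (Set.singleton_subset_iff.mpr h0mem))
    have heq : shiftConfig y (ω₁ ∪ {y}) = ω'' ∪ {0} := by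
      ext z
      simp only [shiftConfig, Set.mem_union, Set.mem_setOf_eq, Set.mem_singleton_iff,
        hω'', add_eq_right]
    rw [← heq]
    exact hasDISRPath_shift y _ hT1
  · rintro ⟨ω, hno, hyes⟩
    have hsub : bigPhi R₀ φ ω ⊆ {0} := fun z hz => hz.1
    by_cases h0 : (0 : Site) ∈ bigPhi R₀ φ ω
    · obtain ⟨-, x, hxball, hx0⟩ := h0
      obtain ⟨z, hz, hzx⟩ := hx0
      have hz' : z = -x := by
        have := congrArg (fun w => w - x) hzx
        simpa using this
      refine ⟨shiftConfig x ω, fun h => hno (hasDISRPath_unshift x _ h), ?_⟩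
      apply hasDISRPath_mono
        (show shiftConfig x ω ∪ {-x} ⊆ shiftConfig x ω ∪ φ (shiftConfig x ω) from
          Set.union_subset_union_right _ (Set.singleton_subset_iff.mpr (hz' ▸ hz)))
      have heq : shiftConfig x (ω ∪ {0}) = shiftConfig x ω ∪ {-x} := by
        ext z
        simp only [shiftConfig, Set.mem_union, Set.mem_setOf_eq, Set.mem_singleton_iff,
          add_eq_zero_iff_eq_neg]
      rw [← heq]
      exact hasDISRPath_shift x _
        (hasDISRPath_mono (Set.union_subset_union_right _ hsub) hyes)
    · exfalso
      apply hno
      apply hasDISRPath_mono (show ω ∪ bigPhi R₀ φ ω ⊆ ω from ?_) hyes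
      apply Set.union_subset (Set.Subset.refl _)
      intro z hz
      have hz0 : z = 0 := hz.1
      exact absurd (hz0 ▸ hz) h0

end PercEnh
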